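/- Let γ > 0, K > 0, 0 ≤ σ_s < σ_f with σ_s < 1, and let τ, t₁ ∈ ℝ and x₁ with 1/σ_f < x₁ ≤ 1. Define F(t₂) = τ + σ_f (t₂ - t₁)/(σ_s - σ_f) + (γ K (σ_s - σ_f))⁻¹ · ln(1 - γ K (t₂ - t₁)/x₁), and for each t₂ ≥ t₁ with x₂(t₂) := x₁ - γ K (t₂ - t₁) > 1/σ_f and F(t₂) ≥ 0, let (X_{t₂}, Y_{t₂}) be the solution of the SIR system X' = -γ σ_s X Y, Y' = γ σ_s X Y - γ Y with initial data (X_{t₂}(t₂), Y_{t₂}(t₂)) = (x₂(t₂), K). Then the function φ(t₂) = X_{t₂}(t₂ + F(t₂)) is strictly decreasing: for any two such times a < b, φ(a) > φ(b). -/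

import Mathlib

open Set


private lemma monoOn_HDA {f f' : ℝ → ℝ} {c d : ℝ}
    (hcont : ContinuousOn f (Icc c d))
    (hder : ∀ u ∈ Ioo c d, HasDerivAt f (f' u) u)
    (h0 : ∀ u ∈ Ioo c d, 0 ≤ f' u) : MonotoneOn f (Icc c d) := by
  apply monotoneOn_of_deriv_nonneg (convex_Icc c d) hcont
  · intro u hu
    rw [interior_Icc] at hu
    exact (hder u hu).differentiableAt.differentiableWithinAt
  · intro u hu
    rw [interior_Icc] at hu
    rw [(hder u hu).deriv]; exact h0 u hu

private lemma antiOn_HDA {f f' : ℝ → ℝ} {c d : ℝ}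
    (hcont : ContinuousOn f (Icc c d))
    (hder : ∀ u ∈ Ioo c d, HasDerivAt f (f' u) u)
    (h0 : ∀ u ∈ Ioo c d, f' u ≤ 0) : AntitoneOn f (Icc c d) := by
  apply antitoneOn_of_deriv_nonpos (convex_Icc c d) hcont
  · intro u hu
    rw [interior_Icc] at hu
    exact (hder u hu).differentiableAt.differentiableWithinAt
  · intro u hu
    rw [interior_Icc] at hu
    rw [(hder u hu).deriv]; exact h0 u hu

private lemma strictMonoOn_HDA {f : ℝ → ℝ} {c d : ℝ}
    (hcont : ContinuousOn f (Icc c d))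
    (hder : ∀ u ∈ Ioo c d, ∃ v, HasDerivAt f v u ∧ 0 < v) : StrictMonoOn f (Icc c d) := by
  apply strictMonoOn_of_deriv_pos (convex_Icc c d) hcont
  intro u hu
  rw [interior_Icc] at hu
  obtain ⟨v, hv, hv0⟩ := hder u hu
  rw [hv.deriv]; exact hv0

private lemma strictAntiOn_HDA {f : ℝ → ℝ} {c d : ℝ}
    (hcont : ContinuousOn f (Icc c d))
    (hder : ∀ u ∈ Ioo c d, ∃ v, HasDerivAt f v u ∧ v < 0) : StrictAntiOn f (Icc c d) := by
  apply strictAntiOn_of_deriv_neg (convex_Icc c d) hcont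
  intro u hu
  rw [interior_Icc] at hu
  obtain ⟨v, hv, hv0⟩ := hder u hu
  rw [hv.deriv]; exact hv0

private lemma constOn_HDA {f : ℝ → ℝ} {c d : ℝ} (hcd : c ≤ d)
    (hcont : ContinuousOn f (Icc c d))
    (hder : ∀ u ∈ Ioo c d, HasDerivAt f 0 u) :
    ∀ t ∈ Icc c d, f t = f c := by
  have hm := monoOn_HDA (f' := fun _ => (0:ℝ)) hcont hder (fun _ _ => le_refl _)
  have ha := antiOn_HDA (f' := fun _ => (0:ℝ)) hcont hder (fun _ _ => le_refl _)
  intro t ht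
  exact le_antisymm (ha (left_mem_Icc.2 hcd) ht ht.1) (hm (left_mem_Icc.2 hcd) ht ht.1)

private lemma nonneg_of_barrier {D : ℝ → ℝ} {L : ℝ}
    (hcont : ContinuousOn D (Icc 0 L)) (hD0 : D 0 = 0)
    (hder : ∀ s ∈ Ioo 0 L, D s ≤ 0 → ∃ v, HasDerivAt D v s ∧ 0 < v) :
    ∀ s ∈ Icc 0 L, 0 ≤ D s := by
  by_contra hcon
  push_neg at hcon
  obtain ⟨s₀, hs₀, hneg⟩ := hcon
  have hs₀0 : 0 < s₀ := by
    rcases eq_or_lt_of_le hs₀.1 with h | h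
    · exfalso; rw [← h, hD0] at hneg; exact absurd hneg (lt_irrefl 0)
    · exact h
  have hsub : Icc 0 s₀ ⊆ Icc 0 L := Icc_subset_Icc_right hs₀.2
  set C := Icc 0 s₀ ∩ D ⁻¹' (Ici 0) with hCdef
  have hCc : IsClosed C :=
    (hcont.mono hsub).preimage_isClosed_of_isClosed isClosed_Icc isClosed_Ici
  have hCne : C.Nonempty := ⟨0, ⟨le_refl 0, hs₀0.le⟩, by simp [hD0]⟩
  have hbdd : BddAbove C := BddAbove.mono (inter_subset_left) bddAbove_Icc
  have hmem : sSup C ∈ C := hCc.csSup_mem hCne hbdd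
  set s' := sSup C with hs'def
  have hs'0 : 0 ≤ s' := hmem.1.1
  have hs's₀ : s' < s₀ := by
    rcases eq_or_lt_of_le hmem.1.2 with h | h
    · exfalso
      have : (0:ℝ) ≤ D s₀ := by have := hmem.2; rw [h] at this; exact this
      linarith
    · exact h
  have hneg' : ∀ u, s' < u → u ≤ s₀ → D u < 0 := by
    intro u h1 h2
    by_contra hge
    push_neg at hge
    have : u ∈ C := ⟨⟨by linarith, h2⟩, hge⟩
    have := le_csSup hbdd this
    linarith
  have hmono : StrictMonoOn D (Icc s' s₀) := by
    apply strictMonoOn_HDA (hcont.mono (Icc_subset_Icc (by linarith) hs₀.2))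
    intro u hu
    exact hder u ⟨lt_of_le_of_lt hs'0 hu.1, lt_of_lt_of_le hu.2 hs₀.2⟩
      (hneg' u hu.1 hu.2.le).le
  have := hmono (left_mem_Icc.2 hs's₀.le) (right_mem_Icc.2 hs's₀.le) hs's₀
  have h2 : (0:ℝ) ≤ D s' := hmem.2
  linarith

private lemma sir_aux {γ σs K x₀ c d : ℝ} {X Y : ℝ → ℝ}
    (hγ : 0 < γ) (hK : 0 < K) (hσs : 0 ≤ σs) (hσs1 : σs < 1)
    (hx₀ : 0 < x₀) (hx₀1 : x₀ ≤ 1)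
    (hX : ∀ s ∈ Icc c d, HasDerivWithinAt X (-γ * σs * X s * Y s) (Icc c d) s)
    (hY : ∀ s ∈ Icc c d, HasDerivWithinAt Y (γ * σs * X s * Y s - γ * Y s) (Icc c d) s)
    (hX0 : X c = x₀) (hY0 : Y c = K)
    (e : ℝ) (he : e ∈ Icc c d)
    (hpos : ∀ u ∈ Ico c e, 0 < X u ∧ 0 < Y u) :
    (∀ t ∈ Icc c e, X t ≤ x₀ ∧ Y t ≤ K) ∧ 0 < X e ∧ 0 < Y e := by
  have hce : c ≤ e := he.1
  have hsub : Icc c e ⊆ Icc c d := Icc_subset_Icc_right he.2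
  have hXder : ∀ u ∈ Ioo c e, HasDerivAt X (-γ * σs * X u * Y u) u := by
    intro u hu
    have hu' : u ∈ Icc c d := hsub ⟨hu.1.le, hu.2.le⟩
    exact (hX u hu').hasDerivAt (Icc_mem_nhds hu.1 (lt_of_lt_of_le hu.2 he.2))
  have hYder : ∀ u ∈ Ioo c e, HasDerivAt Y (γ * σs * X u * Y u - γ * Y u) u := by
    intro u hu
    have hu' : u ∈ Icc c d := hsub ⟨hu.1.le, hu.2.le⟩
    exact (hY u hu').hasDerivAt (Icc_mem_nhds hu.1 (lt_of_lt_of_le hu.2 he.2))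
  have hXcont : ContinuousOn X (Icc c e) :=
    fun s hs => ((hX s (hsub hs)).continuousWithinAt).mono hsub
  have hYcont : ContinuousOn Y (Icc c e) :=
    fun s hs => ((hY s (hsub hs)).continuousWithinAt).mono hsub
  -- X ≤ x₀ on [c,e]
  have hXanti : AntitoneOn X (Icc c e) := by
    apply antiOn_HDA hXcont hXder
    intro u hu
    obtain ⟨hXu, hYu⟩ := hpos u ⟨hu.1.le, hu.2⟩
    nlinarith [mul_nonneg (mul_nonneg (mul_nonneg hγ.le hσs) hXu.le) hYu.le]
  have hXle : ∀ t ∈ Icc c e, X t ≤ x₀ := by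
    intro t ht
    have := hXanti (left_mem_Icc.2 hce) ht ht.1
    rwa [hX0] at this
  -- Y ≤ K on [c,e]
  have hYanti : AntitoneOn Y (Icc c e) := by
    apply antiOn_HDA hYcont hYder
    intro u hu
    obtain ⟨hXu, hYu⟩ := hpos u ⟨hu.1.le, hu.2⟩
    have hX1 : X u ≤ 1 := le_trans (hXle u ⟨hu.1.le, hu.2.le⟩) hx₀1
    have h1 : σs * X u ≤ 1 := le_trans (mul_le_of_le_one_right hσs hX1) hσs1.le
    nlinarith [mul_nonneg (mul_pos hγ hYu).le (sub_nonneg.2 h1)]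
  have hYle : ∀ t ∈ Icc c e, Y t ≤ K := by
    intro t ht
    have := hYanti (left_mem_Icc.2 hce) ht ht.1
    rwa [hY0] at this
  -- positivity of Y at e via Gronwall barrier g = Y * exp (γ (t - c))
  have hYe : 0 < Y e := by
    have hg : MonotoneOn (fun t => Y t * Real.exp (γ * (t - c))) (Icc c e) := by
      apply monoOn_HDA (f' := fun u => (γ * σs * X u * Y u - γ * Y u) * Real.exp (γ * (u - c))
          + Y u * (Real.exp (γ * (u - c)) * γ))
      · exact hYcont.mul (Continuous.continuousOn (by continuity))
      · intro u hu
        have h1 : HasDerivAt (fun t : ℝ => γ * (t - c)) γ u := by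
          simpa using ((hasDerivAt_id u).sub_const c).const_mul γ
        exact (hYder u hu).mul h1.exp
      · intro u hu
        obtain ⟨hXu, hYu⟩ := hpos u ⟨hu.1.le, hu.2⟩
        have hE : 0 < Real.exp (γ * (u - c)) := Real.exp_pos _
        have : (γ * σs * X u * Y u - γ * Y u) * Real.exp (γ * (u - c))
            + Y u * (Real.exp (γ * (u - c)) * γ) = γ * σs * X u * Y u * Real.exp (γ * (u - c)) := by
          ring
        rw [this]
        positivity
    have := hg (left_mem_Icc.2 hce) (right_mem_Icc.2 hce) hce
    simp only [hY0, sub_self, mul_zero, Real.exp_zero, mul_one] at this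
    have hE : 0 < Real.exp (γ * (e - c)) := Real.exp_pos _
    nlinarith
  -- positivity of X at e via h = X * exp (γ σs K (t - c))
  have hXe : 0 < X e := by
    have hg : MonotoneOn (fun t => X t * Real.exp (γ * σs * K * (t - c))) (Icc c e) := by
      apply monoOn_HDA (f' := fun u => (-γ * σs * X u * Y u) * Real.exp (γ * σs * K * (u - c))
          + X u * (Real.exp (γ * σs * K * (u - c)) * (γ * σs * K)))
      · exact hXcont.mul (Continuous.continuousOn (by continuity))
      · intro u hu
        have h1 : HasDerivAt (fun t : ℝ => γ * σs * K * (t - c)) (γ * σs * K) u := by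
          simpa using ((hasDerivAt_id u).sub_const c).const_mul (γ * σs * K)
        exact (hXder u hu).mul h1.exp
      · intro u hu
        obtain ⟨hXu, hYu⟩ := hpos u ⟨hu.1.le, hu.2⟩
        have hYK : Y u ≤ K := hYle u ⟨hu.1.le, hu.2.le⟩
        have hE : 0 < Real.exp (γ * σs * K * (u - c)) := Real.exp_pos _
        have heq : (-γ * σs * X u * Y u) * Real.exp (γ * σs * K * (u - c))
            + X u * (Real.exp (γ * σs * K * (u - c)) * (γ * σs * K))
            = γ * σs * X u * (K - Y u) * Real.exp (γ * σs * K * (u - c)) := by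
          ring
        rw [heq]
        exact mul_nonneg (mul_nonneg (by positivity) (sub_nonneg.2 hYK)) hE.le
    have := hg (left_mem_Icc.2 hce) (right_mem_Icc.2 hce) hce
    simp only [hX0, sub_self, mul_zero, Real.exp_zero, mul_one] at this
    have hE : 0 < Real.exp (γ * σs * K * (e - c)) := Real.exp_pos _
    nlinarith
  exact ⟨fun t ht => ⟨hXle t ht, hYle t ht⟩, hXe, hYe⟩

private lemma sir_bounds {γ σs K x₀ c d : ℝ} {X Y : ℝ → ℝ}
    (hγ : 0 < γ) (hK : 0 < K) (hσs : 0 ≤ σs) (hσs1 : σs < 1)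
    (hx₀ : 0 < x₀) (hx₀1 : x₀ ≤ 1)
    (hX : ∀ s ∈ Icc c d, HasDerivWithinAt X (-γ * σs * X s * Y s) (Icc c d) s)
    (hY : ∀ s ∈ Icc c d, HasDerivWithinAt Y (γ * σs * X s * Y s - γ * Y s) (Icc c d) s)
    (hX0 : X c = x₀) (hY0 : Y c = K) :
    ∀ t ∈ Icc c d, (0 < X t ∧ X t ≤ x₀) ∧ (0 < Y t ∧ Y t ≤ K) := by
  have hXcont : ContinuousOn X (Icc c d) := fun s hs => (hX s hs).continuousWithinAt
  have hYcont : ContinuousOn Y (Icc c d) := fun s hs => (hY s hs).continuousWithinAt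
  have hgood : ∀ t ∈ Icc c d, 0 < X t ∧ 0 < Y t := by
    set B := (Icc c d ∩ X ⁻¹' (Iic 0)) ∪ (Icc c d ∩ Y ⁻¹' (Iic 0)) with hBdef
    have hBclosed : IsClosed B :=
      (hXcont.preimage_isClosed_of_isClosed isClosed_Icc isClosed_Iic).union
        (hYcont.preimage_isClosed_of_isClosed isClosed_Icc isClosed_Iic)
    have hBmem : ∀ t, t ∈ B ↔ t ∈ Icc c d ∧ (X t ≤ 0 ∨ Y t ≤ 0) := by
      intro t
      simp only [hBdef, mem_union, mem_inter_iff, mem_preimage, mem_Iic]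
      tauto
    have hBempty : B = ∅ := by
      by_contra hne
      have hCne : B.Nonempty := nonempty_iff_ne_empty.2 hne
      have hbdd : BddBelow B :=
        BddBelow.mono (fun x hx => ((hBmem x).1 hx).1) (bddBelow_Icc : BddBelow (Icc c d))
      have hmem := hBclosed.csInf_mem hCne hbdd
      rw [hBmem] at hmem
      obtain ⟨hmemIcc, hbad⟩ := hmem
      have hcinf : c < sInf B := by
        rcases eq_or_lt_of_le hmemIcc.1 with h | h
        · exfalso
          rw [← h, hX0, hY0] at hbad
          rcases hbad with h' | h' <;> linarith
        · exact h
      have hpos : ∀ u ∈ Ico c (sInf B), 0 < X u ∧ 0 < Y u := by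
        intro u hu
        have hu' : u ∈ Icc c d := ⟨hu.1, hu.2.le.trans hmemIcc.2⟩
        have : u ∉ B := notMem_of_lt_csInf hu.2 hbdd
        rw [hBmem] at this
        push_neg at this
        exact this hu'
      obtain ⟨_, hXe, hYe⟩ := sir_aux hγ hK hσs hσs1 hx₀ hx₀1 hX hY hX0 hY0
        (sInf B) hmemIcc hpos
      rcases hbad with h' | h' <;> linarith
    intro t ht
    have htB : t ∉ B := by rw [hBempty]; exact notMem_empty t
    rw [hBmem] at htB
    push_neg at htB
    exact htB ht
  intro t ht
  obtain ⟨hb, _, _⟩ := sir_aux hγ hK hσs hσs1 hx₀ hx₀1 hX hY hX0 hY0 t ht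
    (fun u hu => hgood u ⟨hu.1, hu.2.le.trans ht.2⟩)
  obtain ⟨h1, h2⟩ := hb t ⟨ht.1, le_refl t⟩
  exact ⟨⟨(hgood t ht).1, h1⟩, (hgood t ht).2, h2⟩

private lemma sir_conserved {γ σs K x₀ c d : ℝ} {X Y : ℝ → ℝ}
    (hcd : c ≤ d)
    (hbnd : ∀ t ∈ Icc c d, (0 < X t ∧ X t ≤ x₀) ∧ (0 < Y t ∧ Y t ≤ K))
    (hX : ∀ s ∈ Icc c d, HasDerivWithinAt X (-γ * σs * X s * Y s) (Icc c d) s)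
    (hY : ∀ s ∈ Icc c d, HasDerivWithinAt Y (γ * σs * X s * Y s - γ * Y s) (Icc c d) s)
    (hX0 : X c = x₀) (hY0 : Y c = K) :
    ∀ t ∈ Icc c d,
      Real.log (X t) - σs * (X t + Y t) = Real.log x₀ - σs * (x₀ + K) := by
  have hXcont : ContinuousOn X (Icc c d) := fun s hs => (hX s hs).continuousWithinAt
  have hYcont : ContinuousOn Y (Icc c d) := fun s hs => (hY s hs).continuousWithinAt
  have hVcont : ContinuousOn (fun t => Real.log (X t) - σs * (X t + Y t)) (Icc c d) := by
    apply ContinuousOn.sub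
    · exact hXcont.log (fun t ht => (hbnd t ht).1.1.ne')
    · exact (continuousOn_const.mul (hXcont.add hYcont))
  have hVder : ∀ u ∈ Ioo c d, HasDerivAt (fun t => Real.log (X t) - σs * (X t + Y t)) 0 u := by
    intro u hu
    have hu' : u ∈ Icc c d := ⟨hu.1.le, hu.2.le⟩
    have hXu : 0 < X u := (hbnd u hu').1.1
    have hXd : HasDerivAt X (-γ * σs * X u * Y u) u :=
      (hX u hu').hasDerivAt (Icc_mem_nhds hu.1 hu.2)
    have hYd : HasDerivAt Y (γ * σs * X u * Y u - γ * Y u) u :=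
      (hY u hu').hasDerivAt (Icc_mem_nhds hu.1 hu.2)
    have h1 : HasDerivAt (fun t => Real.log (X t)) ((-γ * σs * X u * Y u) / X u) u :=
      hXd.log hXu.ne'
    have h2 : HasDerivAt (fun t => σs * (X t + Y t))
        (σs * ((-γ * σs * X u * Y u) + (γ * σs * X u * Y u - γ * Y u))) u :=
      (hXd.add hYd).const_mul σs
    have h3 := h1.sub h2
    refine h3.congr_deriv ?_
    rw [mul_div_right_comm, mul_div_cancel_right₀ _ hXu.ne']
    ring
  intro t ht
  have := constOn_HDA hcd hVcont hVder t ht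
  simp only [hX0, hY0] at this
  exact this

private lemma barrier_step {γ σs K xa xb f g p q : ℝ}
    (hγ : 0 < γ) (hσpos : 0 < σs) (hσs1 : σs < 1)
    (hf0 : 0 < f) (hg0 : 0 < g) (hg1 : g ≤ 1)
    (hΔ : σs * (xa - xb) < Real.log xa - Real.log xb)
    (hA : Real.log f - σs * (f + p) = Real.log xa - σs * (xa + K))
    (hB : Real.log g - σs * (g + q) = Real.log xb - σs * (xb + K))
    (hDs : Real.log f - Real.log g ≤ 0) :
    0 < γ * (σs * q) - γ * (σs * p) := by
  have hexp : Real.exp (Real.log f - Real.log g) = f / g := by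
    rw [Real.exp_sub, Real.exp_log hf0, Real.exp_log hg0]
  have h8 := Real.add_one_le_exp (Real.log f - Real.log g)
  rw [hexp] at h8
  have h9' := (le_div_iff₀ hg0).1 h8
  have hgD : g * (Real.log f - Real.log g) ≤ f - g := by nlinarith
  have h9 : Real.log f - Real.log g ≤ f - g := by
    nlinarith [mul_nonneg (sub_nonneg.2 hg1) (neg_nonneg.2 hDs)]
  have h12 : 0 < σs * q - σs * p := by
    nlinarith [mul_le_mul_of_nonneg_left h9 hσpos.le,
      mul_nonneg (sub_nonneg.2 hσs1.le) (neg_nonneg.2 hDs), hA, hB, hΔ]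
  nlinarith [mul_pos hγ h12]

set_option maxHeartbeats 1000000 in
/-- The susceptible fraction at the end of the strict quarantine of maximal duration
`F(t₂)` started at time `t₂` (with initial data `(x₁ - γ K (t₂ - t₁), K)` and dynamics
given by the SIR system with reproduction number `σ_s`) is strictly decreasing in `t₂`:
for admissible times `a < b`, `φ(a) > φ(b)`. -/
theorem end_susceptible_strictly_decreasing
    (γ K σs σf τ t₁ x₁ : ℝ) (hγ : 0 < γ) (hK : 0 < K)
    (hσs : 0 ≤ σs) (hσsf : σs < σf) (hσs1 : σs < 1)
    (hx₁ : 1 / σf < x₁) (hx₁le : x₁ ≤ 1)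
    (F : ℝ → ℝ)
    (hF : ∀ t₂, F t₂ = τ + σf * (t₂ - t₁) / (σs - σf)
      + (γ * K * (σs - σf))⁻¹ * Real.log (1 - γ * K * (t₂ - t₁) / x₁))
    (a b : ℝ) (hab : a < b) (ht₁a : t₁ ≤ a)
    (hxa : 1 / σf < x₁ - γ * K * (a - t₁)) (hFa : 0 ≤ F a)
    (hxb : 1 / σf < x₁ - γ * K * (b - t₁)) (hFb : 0 ≤ F b)
    (Xa Ya Xb Yb : ℝ → ℝ)
    (hXa : ∀ s ∈ Icc a (a + F a),
      HasDerivWithinAt Xa (-γ * σs * Xa s * Ya s) (Icc a (a + F a)) s)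
    (hYa : ∀ s ∈ Icc a (a + F a),
      HasDerivWithinAt Ya (γ * σs * Xa s * Ya s - γ * Ya s) (Icc a (a + F a)) s)
    (hXa0 : Xa a = x₁ - γ * K * (a - t₁)) (hYa0 : Ya a = K)
    (hXb : ∀ s ∈ Icc b (b + F b),
      HasDerivWithinAt Xb (-γ * σs * Xb s * Yb s) (Icc b (b + F b)) s)
    (hYb : ∀ s ∈ Icc b (b + F b),
      HasDerivWithinAt Yb (γ * σs * Xb s * Yb s - γ * Yb s) (Icc b (b + F b)) s)
    (hXb0 : Xb b = x₁ - γ * K * (b - t₁)) (hYb0 : Yb b = K) :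
    Xb (b + F b) < Xa (a + F a) := by
  obtain ⟨xa, hxadef⟩ : ∃ v, v = x₁ - γ * K * (a - t₁) := ⟨_, rfl⟩
  obtain ⟨xb, hxbdef⟩ : ∃ v, v = x₁ - γ * K * (b - t₁) := ⟨_, rfl⟩
  rw [← hxadef] at hxa hXa0
  rw [← hxbdef] at hxb hXb0
  have hσf : 0 < σf := lt_of_le_of_lt hσs hσsf
  have hx₁0 : 0 < x₁ := lt_trans (div_pos one_pos hσf) hx₁
  have hxa0 : 0 < xa := lt_trans (div_pos one_pos hσf) hxa
  have hxb0 : 0 < xb := lt_trans (div_pos one_pos hσf) hxb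
  have hxax₁ : xa ≤ x₁ := by
    rw [hxadef]
    linarith only [mul_nonneg (mul_pos hγ hK).le (sub_nonneg.2 ht₁a)]
  have hxa1 : xa ≤ 1 := le_trans hxax₁ hx₁le
  have hxbx₁ : xb ≤ x₁ := by
    rw [hxbdef]
    linarith only [mul_nonneg (mul_pos hγ hK).le (sub_nonneg.2 (le_of_lt (lt_of_le_of_lt ht₁a hab)))]
  have hxb1 : xb ≤ 1 := le_trans hxbx₁ hx₁le
  have hxab : xa - xb = γ * K * (b - a) := by rw [hxadef, hxbdef]; ring
  have hxbxa : xb < xa := by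
    rw [hxadef, hxbdef]
    linarith only [mul_pos (mul_pos hγ hK) (sub_pos.2 hab)]
  -- log inequalities
  have hΛ1 : (xa - xb) / xa ≤ Real.log xa - Real.log xb := by
    have h := Real.log_le_sub_one_of_pos (div_pos hxb0 hxa0)
    rw [Real.log_div hxb0.ne' hxa0.ne'] at h
    have he : 1 - xb / xa = (xa - xb) / xa := by field_simp
    linarith
  have hΛ2 : xa - xb ≤ (xa - xb) / xa := by
    rw [le_div_iff₀ hxa0]
    linarith only [mul_nonneg (sub_nonneg.2 hxbxa.le) (sub_nonneg.2 hxa1)]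
  have hΛ : xa - xb ≤ Real.log xa - Real.log xb := le_trans hΛ2 hΛ1
  have hΔ : σs * (xa - xb) < Real.log xa - Real.log xb := by
    linarith only [hΛ, mul_pos (sub_pos.2 hσs1) (sub_pos.2 hxbxa)]
  have haFa : a ≤ a + F a := by linarith
  have hbFb : b ≤ b + F b := by linarith
  have contXa : ContinuousOn Xa (Icc a (a + F a)) := fun s hs => (hXa s hs).continuousWithinAt
  have contXb : ContinuousOn Xb (Icc b (b + F b)) := fun s hs => (hXb s hs).continuousWithinAt
  rcases eq_or_lt_of_le hσs with hσ0 | hσpos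
  · -- σs = 0 : X constant
    have hXa' : ∀ u ∈ Ioo a (a + F a), HasDerivAt Xa 0 u := by
      intro u hu
      have h := (hXa u ⟨hu.1.le, hu.2.le⟩).hasDerivAt (Icc_mem_nhds hu.1 hu.2)
      simpa [← hσ0] using h
    have hXb' : ∀ u ∈ Ioo b (b + F b), HasDerivAt Xb 0 u := by
      intro u hu
      have h := (hXb u ⟨hu.1.le, hu.2.le⟩).hasDerivAt (Icc_mem_nhds hu.1 hu.2)
      simpa [← hσ0] using h
    have h1 := constOn_HDA haFa contXa hXa' (a + F a) (right_mem_Icc.2 haFa)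
    have h2 := constOn_HDA hbFb contXb hXb' (b + F b) (right_mem_Icc.2 hbFb)
    rw [h1, h2, hXa0, hXb0]
    exact hxbxa
  · -- σs > 0
    have hboundsA : ∀ t ∈ Icc a (a + F a),
        (0 < Xa t ∧ Xa t ≤ xa) ∧ (0 < Ya t ∧ Ya t ≤ K) :=
      sir_bounds hγ hK hσs hσs1 hxa0 hxa1 hXa hYa hXa0 hYa0
    have hboundsB : ∀ t ∈ Icc b (b + F b),
        (0 < Xb t ∧ Xb t ≤ xb) ∧ (0 < Yb t ∧ Yb t ≤ K) :=
      sir_bounds hγ hK hσs hσs1 hxb0 hxb1 hXb hYb hXb0 hYb0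
    have hXaD : ∀ u ∈ Ioo a (a + F a), HasDerivAt Xa (-γ * σs * Xa u * Ya u) u :=
      fun u hu => (hXa u ⟨hu.1.le, hu.2.le⟩).hasDerivAt (Icc_mem_nhds hu.1 hu.2)
    have hXbD : ∀ u ∈ Ioo b (b + F b), HasDerivAt Xb (-γ * σs * Xb u * Yb u) u :=
      fun u hu => (hXb u ⟨hu.1.le, hu.2.le⟩).hasDerivAt (Icc_mem_nhds hu.1 hu.2)
    have hXbanti : AntitoneOn Xb (Icc b (b + F b)) := by
      apply antiOn_HDA (f' := fun u => -γ * σs * Xb u * Yb u) contXb hXbD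
      intro u hu
      obtain ⟨⟨h1, _⟩, h2, _⟩ := hboundsB u ⟨hu.1.le, hu.2.le⟩
      show -γ * σs * Xb u * Yb u ≤ 0
      linarith only [mul_nonneg (mul_nonneg (mul_nonneg hγ.le hσpos.le) h1.le) h2.le]
    have hXbstrict : StrictAntiOn Xb (Icc b (b + F b)) := by
      apply strictAntiOn_HDA contXb
      intro u hu
      obtain ⟨⟨h1, _⟩, h2, _⟩ := hboundsB u ⟨hu.1.le, hu.2.le⟩
      exact ⟨-γ * σs * Xb u * Yb u, hXbD u hu,
        by linarith only [mul_pos (mul_pos (mul_pos hγ hσpos) h1) h2]⟩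
    -- key duration inequality : σs (F a - F b) < b - a
    have key : σs * (F a - F b) < b - a := by
      have hσsσf : σs - σf ≠ 0 := by linarith
      have hγK : γ * K ≠ 0 := (mul_pos hγ hK).ne'
      have e1 : 1 - γ * K * (a - t₁) / x₁ = xa / x₁ := by rw [hxadef]; field_simp
      have e2 : 1 - γ * K * (b - t₁) / x₁ = xb / x₁ := by rw [hxbdef]; field_simp
      have hFa' : F a = τ + σf * (a - t₁) / (σs - σf)
          + (γ * K * (σs - σf))⁻¹ * (Real.log xa - Real.log x₁) := by
        rw [hF a, e1, Real.log_div hxa0.ne' hx₁0.ne']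
      have hFb' : F b = τ + σf * (b - t₁) / (σs - σf)
          + (γ * K * (σs - σf))⁻¹ * (Real.log xb - Real.log x₁) := by
        rw [hF b, e2, Real.log_div hxb0.ne' hx₁0.ne']
      have hFabEq : (σs - σf) * (F a - F b)
          = σf * (a - b) + (γ * K)⁻¹ * (Real.log xa - Real.log xb) := by
        rw [hFa', hFb']
        field_simp
        ring
      have hμ : b - a ≤ (γ * K)⁻¹ * (Real.log xa - Real.log xb) := by
        rw [inv_mul_eq_div, le_div_iff₀ (mul_pos hγ hK)]
        linarith only [hΛ, hxab]
      have h2 : (σf - σs) * (σs * (F a - F b))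
          = σs * (σf * (b - a) - (γ * K)⁻¹ * (Real.log xa - Real.log xb)) := by
        linear_combination (-σs) * hFabEq
      have h3 : σs * (σf * (b - a) - (γ * K)⁻¹ * (Real.log xa - Real.log xb))
          < (σf - σs) * (b - a) := by
        linarith only [mul_le_mul_of_nonneg_left hμ hσpos.le,
          mul_pos (mul_pos (sub_pos.2 hσs1) hσf) (sub_pos.2 hab)]
      have h4 : (σf - σs) * (σs * (F a - F b)) < (σf - σs) * (b - a) := by
        rw [h2]; exact h3
      exact lt_of_mul_lt_mul_left h4 (by linarith)
    by_cases hcase : xb < Xa (a + F a)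
    · have h5 : Xb (b + F b) ≤ Xb b :=
        hXbanti (left_mem_Icc.2 hbFb) (right_mem_Icc.2 hbFb) hbFb
      rw [hXb0] at h5
      linarith
    · push_neg at hcase
      obtain ⟨t₀, ht₀mem, hXat₀⟩ : ∃ t₀ ∈ Icc a (a + F a), Xa t₀ = xb := by
        have hsub := intermediate_value_Icc' haFa contXa
        have hmem : xb ∈ Icc (Xa (a + F a)) (Xa a) := ⟨hcase, by rw [hXa0]; exact hxbxa.le⟩
        obtain ⟨t₀, ht₀, h⟩ := hsub hmem
        exact ⟨t₀, ht₀, h⟩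
      -- lower bound on t₀ - a
      have hW : MonotoneOn (fun t => Xa t + γ * σs * K * (t - a)) (Icc a (a + F a)) := by
        apply monoOn_HDA (f' := fun u => -γ * σs * Xa u * Ya u + γ * σs * K)
        · exact contXa.add (Continuous.continuousOn (continuous_const.mul (continuous_id.sub continuous_const)))
        · intro u hu
          exact (hXaD u hu).add
            (by simpa using ((hasDerivAt_id u).sub_const a).const_mul (γ * σs * K))
        · intro u hu
          obtain ⟨⟨h1, h1'⟩, h2, h2'⟩ := hboundsA u ⟨hu.1.le, hu.2.le⟩
          have hXY : Xa u * Ya u ≤ K :=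
            le_trans (mul_le_of_le_one_left h2.le (le_trans h1' hxa1)) h2'
          show 0 ≤ -γ * σs * Xa u * Ya u + γ * σs * K
          linarith only [mul_nonneg (mul_pos hγ hσpos).le (sub_nonneg.2 hXY)]
      have hWmono := hW (left_mem_Icc.2 haFa) ht₀mem ht₀mem.1
      simp only [hXa0, hXat₀, sub_self, mul_zero, add_zero] at hWmono
      have hσlow : b - a ≤ σs * (t₀ - a) := by
        have h6 : γ * K * (b - a) ≤ γ * K * (σs * (t₀ - a)) := by
          linarith only [hxab, hWmono]
        exact le_of_mul_le_mul_left h6 (mul_pos hγ hK)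
      have key2 : F a - F b < t₀ - a := by
        have h7 : σs * (F a - F b) < σs * (t₀ - a) := lt_of_lt_of_le key hσlow
        exact lt_of_mul_lt_mul_left h7 hσpos.le
      obtain ⟨L, hLdef⟩ : ∃ v, v = a + F a - t₀ := ⟨_, rfl⟩
      have hL0 : 0 ≤ L := by
        have := ht₀mem.2
        rw [hLdef]; linarith
      have hLFb : L < F b := by rw [hLdef]; linarith [ht₀mem.1]
      have hconsA := sir_conserved haFa hboundsA hXa hYa hXa0 hYa0
      have hconsB := sir_conserved hbFb hboundsB hXb hYb hXb0 hYb0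
      have mapsA : ∀ s ∈ Icc (0:ℝ) L, t₀ + s ∈ Icc a (a + F a) := by
        intro s hs
        constructor
        · linarith [ht₀mem.1, hs.1]
        · have := hs.2; rw [hLdef] at this; linarith
      have mapsB : ∀ s ∈ Icc (0:ℝ) L, b + s ∈ Icc b (b + F b) := by
        intro s hs
        exact ⟨by linarith [hs.1], by linarith [hs.2, hLFb]⟩
      obtain ⟨D, hDdef⟩ : ∃ D' : ℝ → ℝ, D' = fun s => Real.log (Xa (t₀ + s)) - Real.log (Xb (b + s)) := ⟨_, rfl⟩
      have hDcont : ContinuousOn D (Icc 0 L) := by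
        rw [hDdef]
        apply ContinuousOn.sub
        · apply ContinuousOn.log
          · exact contXa.comp (Continuous.continuousOn (continuous_const.add continuous_id)) mapsA
          · intro s hs; exact (hboundsA _ (mapsA s hs)).1.1.ne'
        · apply ContinuousOn.log
          · exact contXb.comp (Continuous.continuousOn (continuous_const.add continuous_id)) mapsB
          · intro s hs; exact (hboundsB _ (mapsB s hs)).1.1.ne'
      have hD0 : D 0 = 0 := by
        rw [hDdef]
        simp only [add_zero, hXat₀, hXb0]
        ring
      have hDbarrier : ∀ s ∈ Ioo (0:ℝ) L, D s ≤ 0 → ∃ v, HasDerivAt D v s ∧ 0 < v := by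
        intro s hs hDs
        rw [hDdef]
        have htmem : t₀ + s ∈ Icc a (a + F a) := mapsA s ⟨hs.1.le, hs.2.le⟩
        have humem : b + s ∈ Icc b (b + F b) := mapsB s ⟨hs.1.le, hs.2.le⟩
        obtain ⟨⟨hf0, hfle⟩, hp0, hple⟩ := hboundsA _ htmem
        obtain ⟨⟨hg0, hgle⟩, hq0, hqle⟩ := hboundsB _ humem
        have htin : t₀ + s ∈ Ioo a (a + F a) := by
          constructor
          · linarith [ht₀mem.1, hs.1]
          · have := hs.2; rw [hLdef] at this; linarith [hs.2]
        have huin : b + s ∈ Ioo b (b + F b) := ⟨by linarith [hs.1], by linarith [hs.2, hLFb]⟩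
        have hshift1 : HasDerivAt (fun s : ℝ => t₀ + s) 1 s := by
          simpa using (hasDerivAt_id s).const_add t₀
        have hshift2 : HasDerivAt (fun s : ℝ => b + s) 1 s := by
          simpa using (hasDerivAt_id s).const_add b
        have hXaDs : HasDerivAt (fun s => Xa (t₀ + s))
            ((-γ * σs * Xa (t₀ + s) * Ya (t₀ + s)) * 1) s :=
          HasDerivAt.comp s (hXaD (t₀ + s) htin) hshift1
        have hXbDs : HasDerivAt (fun s => Xb (b + s))
            ((-γ * σs * Xb (b + s) * Yb (b + s)) * 1) s :=
          HasDerivAt.comp s (hXbD (b + s) huin) hshift2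
        have h1 : HasDerivAt (fun s => Real.log (Xa (t₀ + s)))
            ((-γ * σs * Xa (t₀ + s) * Ya (t₀ + s)) * 1 / Xa (t₀ + s)) s :=
          hXaDs.log hf0.ne'
        have h2 : HasDerivAt (fun s => Real.log (Xb (b + s)))
            ((-γ * σs * Xb (b + s) * Yb (b + s)) * 1 / Xb (b + s)) s :=
          hXbDs.log hg0.ne'
        refine ⟨_, h1.sub h2, ?_⟩
        have hval : (-γ * σs * Xa (t₀ + s) * Ya (t₀ + s)) * 1 / Xa (t₀ + s)
            - (-γ * σs * Xb (b + s) * Yb (b + s)) * 1 / Xb (b + s)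
            = γ * (σs * Yb (b + s)) - γ * (σs * Ya (t₀ + s)) := by
          field_simp
          ring
        rw [hval]
        have hDs' : Real.log (Xa (t₀ + s)) - Real.log (Xb (b + s)) ≤ 0 := by
          simp only [hDdef] at hDs
          exact hDs
        exact barrier_step hγ hσpos hσs1 hf0 hg0 (le_trans hgle hxb1) hΔ
          (hconsA _ htmem) (hconsB _ humem) hDs'
      have hDL := nonneg_of_barrier hDcont hD0 hDbarrier L (right_mem_Icc.2 hL0)
      have htL : t₀ + L = a + F a := by rw [hLdef]; ring
      have hbL : b + L ∈ Icc b (b + F b) := ⟨by linarith, by linarith⟩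
      have h13 : Xb (b + L) ≤ Xa (a + F a) := by
        have hDLval : D L = Real.log (Xa (a + F a)) - Real.log (Xb (b + L)) := by
          rw [hDdef]
          simp only [htL]
        rw [hDLval] at hDL
        exact (Real.log_le_log_iff (hboundsB _ hbL).1.1
          (hboundsA _ (right_mem_Icc.2 haFa)).1.1).1 (by linarith)
      have h14 : Xb (b + F b) < Xb (b + L) :=
        hXbstrict hbL (right_mem_Icc.2 hbFb) (by linarith)
      linarith
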